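/- arXiv:1109.2353 — 4 statements merged into one kernel-verified Lean document; each statement's English description precedes it below -/
import Mathlib

section
/- Let B = K[t_1,…,t_s,y_1,…,y_n] be a polynomial ring over an arbitrary field K. If I′ is a binomial ideal of B (i.e., an ideal generated by a set of binomials, where a binomial is a difference m_1 − m_2 of two monomials), then the contraction I′ ∩ K[t_1,…,t_s] is a binomial ideal of K[t_1,…,t_s]. -/
/-- A binomial of a polynomial ring: a difference `m₁ - m₂` of two monomials. -/
def IsBinomial {σ K : Type*} [CommRing K] (f : MvPolynomial σ K) : Prop :=
  ∃ a b : σ →₀ ℕ, f = MvPolynomial.monomial a (1 : K) - MvPolynomial.monomial b (1 : K)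

/-- A binomial ideal: an ideal generated by a set of binomials. -/
def IsBinomialIdeal {σ K : Type*} [CommRing K] (I : Ideal (MvPolynomial σ K)) : Prop :=
  ∃ G : Set (MvPolynomial σ K), (∀ g ∈ G, IsBinomial g) ∧ I = Ideal.span G

open MvPolynomial

lemma mapDomain_zero_mem_span {α β K : Type*} [Field K] (g : α → β) :
    ∀ (f : α →₀ K), Finsupp.mapDomain g f = 0 →
      f ∈ Submodule.span K
        {p : α →₀ K | ∃ a b, g a = g b ∧ p = Finsupp.single a 1 - Finsupp.single b 1} := by
  classical
  suffices H : ∀ (N : ℕ) (f : α →₀ K), f.support.card ≤ N → Finsupp.mapDomain g f = 0 →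
      f ∈ Submodule.span K
        {p : α →₀ K | ∃ a b, g a = g b ∧ p = Finsupp.single a 1 - Finsupp.single b 1} by
    exact fun f hf => H f.support.card f le_rfl hf
  intro N
  induction N with
  | zero =>
    intro f hc _
    have : f = 0 := by
      rw [← Finsupp.support_eq_empty, ← Finset.card_eq_zero]; omega
    simp [this]
  | succ N ih =>
    intro f hc hf
    by_cases h0 : f = 0
    · simp [h0]
    · obtain ⟨a, ha⟩ := Finsupp.support_nonempty_iff.2 h0
      -- evaluate mapDomain at g a
      have happ : ∀ b : β, (Finsupp.mapDomain g f) b = ∑ x ∈ f.support, if g x = b then f x else 0 := by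
        intro b
        simp [Finsupp.mapDomain, Finsupp.sum_apply, Finsupp.sum, Finsupp.single_apply]
      have hsum : ∑ x ∈ f.support, (if g x = g a then f x else 0) = 0 := by
        rw [← happ (g a), hf]; rfl
      -- find a partner b ≠ a with g b = g a
      have hex : ∃ b ∈ f.support, b ≠ a ∧ g b = g a := by
        by_contra hno
        push_neg at hno
        have heq : ∑ x ∈ f.support, (if g x = g a then f x else 0)
            = if g a = g a then f a else 0 := by
          refine Finset.sum_eq_single a (fun x hx hxa => ?_) (fun hna => absurd ha hna)
          rw [if_neg (hno x hx hxa)]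
        rw [heq, if_pos rfl] at hsum
        exact (Finsupp.mem_support_iff.1 ha) hsum
      obtain ⟨b, hbs, hba, hgb⟩ := hex
      set d : α →₀ K := Finsupp.single a 1 - Finsupp.single b 1 with hd
      set f' : α →₀ K := f - f a • d with hf'
      have hsub : ∀ p q : α →₀ K, Finsupp.mapDomain g (p - q)
          = Finsupp.mapDomain g p - Finsupp.mapDomain g q := fun p q =>
        map_sub (Finsupp.mapDomain.addMonoidHom g) p q
      have hda : d a = 1 := by simp [hd, Finsupp.single_apply, hba]
      have hsupp : f'.support ⊆ f.support.erase a := by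
        intro x hx
        rw [Finsupp.mem_support_iff] at hx
        rcases eq_or_ne x a with rfl | hxa
        · exfalso; apply hx; simp [hf', hda]
        · rcases eq_or_ne x b with rfl | hxb
          · exact Finset.mem_erase.2 ⟨hba, hbs⟩
          · refine Finset.mem_erase.2 ⟨hxa, Finsupp.mem_support_iff.2 ?_⟩
            intro hfx
            apply hx
            simp [hf', hd, hfx, Finsupp.single_apply, Ne.symm hxa, Ne.symm hxb]
      have hcard : f'.support.card ≤ N := by
        have := Finset.card_le_card hsupp
        have := Finset.card_erase_of_mem ha
        omega
      have hmapd : Finsupp.mapDomain g d = 0 := by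
        rw [hd, hsub]
        simp [Finsupp.mapDomain_single, hgb]
      have hmap' : Finsupp.mapDomain g f' = 0 := by
        rw [hf', hsub, Finsupp.mapDomain_smul, hmapd, hf]
        simp
      have hmem := ih f' hcard hmap'
      have hdmem : d ∈ Submodule.span K
          {p : α →₀ K | ∃ a b, g a = g b ∧ p = Finsupp.single a 1 - Finsupp.single b 1} :=
        Submodule.subset_span ⟨a, b, hgb.symm, hd⟩
      have : f = f' + f a • d := by rw [hf']; abel
      rw [this]
      exact Submodule.add_mem _ hmem (Submodule.smul_mem _ _ hdmem)

/-- **Lemma.** Let `B = K[t_1,…,t_s,y_1,…,y_n]` be a polynomial ring over an arbitrary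
field `K`. If `I'` is a binomial ideal of `B`, then the contraction
`I' ∩ K[t_1,…,t_s]` (the preimage of `I'` under the inclusion
`K[t_1,…,t_s] → B`, `t_i ↦ t_i`) is a binomial ideal of `K[t_1,…,t_s]`. -/
theorem contraction_of_binomial_ideal_isBinomialIdeal
    {K : Type*} [Field K] {s n : ℕ}
    (I' : Ideal (MvPolynomial (Fin s ⊕ Fin n) K)) (h : IsBinomialIdeal I') :
    IsBinomialIdeal
      (Ideal.comap (MvPolynomial.rename (Sum.inl : Fin s → Fin s ⊕ Fin n)) I') := by
  classical
  obtain ⟨G, hGbin, hGspan⟩ := h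
  -- the congruence
  set c : AddCon ((Fin s ⊕ Fin n) →₀ ℕ) :=
    { r := fun u v => monomial u (1:K) - monomial v 1 ∈ I'
      iseqv := by
        refine ⟨fun u => by simp, fun {u v} huv => ?_, fun {u v w} h1 h2 => ?_⟩
        · have := I'.neg_mem huv; simpa using this
        · have := I'.add_mem h1 h2; simpa using this
      add' := by
        intro u v w x h1 h2
        have key : monomial (u + w) (1:K) - monomial (v + x) 1 =
            monomial w 1 * (monomial u 1 - monomial v 1)
              + monomial v 1 * (monomial w 1 - monomial x 1) := by
          simp only [mul_sub, monomial_mul, mul_one]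
          rw [show w + u = u + w from add_comm _ _, show v + w = w + v from add_comm _ _,
            show w + v = v + w from add_comm _ _]
          abel
        show monomial (u + w) (1:K) - monomial (v + x) 1 ∈ I'
        rw [key]
        exact I'.add_mem (I'.mul_mem_left _ h1) (I'.mul_mem_left _ h2) } with hc
  set L : MvPolynomial (Fin s ⊕ Fin n) K →+* AddMonoidAlgebra K c.Quotient :=
    AddMonoidAlgebra.mapDomainRingHom K c.mk' with hL
  have hLmono : ∀ u : (Fin s ⊕ Fin n) →₀ ℕ, L (monomial u (1:K)) = AddMonoidAlgebra.single (c.mk' u) 1 := by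
    intro u
    rw [hL, ← single_eq_monomial]
    simp [AddMonoidAlgebra.mapDomainRingHom, Finsupp.mapDomain_single]
  have hker : I' ≤ RingHom.ker L := by
    rw [hGspan, Ideal.span_le]
    intro g hg
    obtain ⟨a, b, rfl⟩ := hGbin g hg
    have hgI : monomial a (1:K) - monomial b 1 ∈ I' := hGspan ▸ Ideal.subset_span hg
    have hab : c.mk' a = c.mk' b := c.eq.2 hgI
    simp [RingHom.mem_ker, map_sub, hLmono, hab]
  -- the map on exponents of K[t]
  set φ : (Fin s →₀ ℕ) → c.Quotient := (⇑c.mk') ∘ Finsupp.mapDomain Sum.inl with hφ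
  have hφiff : ∀ a b : Fin s →₀ ℕ, φ a = φ b ↔
      (monomial a (1:K) - monomial b 1) ∈
        Ideal.comap (rename (Sum.inl : Fin s → Fin s ⊕ Fin n)) I' := by
    intro a b
    rw [Ideal.mem_comap, map_sub, rename_monomial, rename_monomial]
    exact c.eq
  -- the generating set
  set G' : Set (MvPolynomial (Fin s) K) :=
    {p | (∃ a b, p = monomial a (1:K) - monomial b 1) ∧
      p ∈ Ideal.comap (rename (Sum.inl : Fin s → Fin s ⊕ Fin n)) I'} with hG'
  have hstep : ∀ f : MvPolynomial (Fin s) K,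
      f ∈ Ideal.comap (rename (Sum.inl : Fin s → Fin s ⊕ Fin n)) I' →
        f ∈ Submodule.span K G' := by
    intro f hf
    rw [Ideal.mem_comap] at hf
    have hL0 : L (rename (Sum.inl : Fin s → Fin s ⊕ Fin n) f) = 0 := hker hf
    have hmap0 : Finsupp.mapDomain φ (AddMonoidAlgebra.coeff f) = 0 := by
      rw [hφ, Finsupp.mapDomain_comp]
      have := congrArg AddMonoidAlgebra.coeff hL0
      simp [hL, rename] at this
      exact this
    have := mapDomain_zero_mem_span φ _ hmap0
    have := Submodule.mem_map_of_mem
      (f := (AddMonoidAlgebra.coeffLinearEquiv K).symm.toLinearMap) this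
    rw [Submodule.map_span] at this
    refine Submodule.span_mono ?_ this
    rintro _ ⟨p, ⟨a, b, hab, rfl⟩, rfl⟩
    have e : (AddMonoidAlgebra.coeffLinearEquiv K).symm.toLinearMap
        (Finsupp.single a (1:K) - Finsupp.single b 1) = monomial a (1:K) - monomial b 1 := by
      rw [map_sub]; rfl
    rw [e]
    exact ⟨⟨a, b, rfl⟩, (hφiff a b).1 hab⟩
  refine ⟨G', fun g hg => hg.1, le_antisymm ?_ ?_⟩
  · intro f hf
    have h1 := hstep f hf
    have h2 : Submodule.span K G' ≤ (Ideal.span G').restrictScalars K :=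
      Submodule.span_le.2 Ideal.subset_span
    exact h2 h1
  · rw [Ideal.span_le]
    exact fun g hg => hg.2
end

section
/- Let B = K[t_1,…,t_s,y_1,…,y_n] be a polynomial ring over the finite field K = 𝔽_q with q elements. Then the vanishing ideal of X* satisfies I(X*) = (t_1 − y^{v_1}, …, t_s − y^{v_s}, y_1^{q−1} − 1, …, y_n^{q−1} − 1) ∩ S, where the intersection is the contraction of the displayed ideal of B along the natural inclusion S → B. -/
set_option synthInstance.maxHeartbeats 400000
set_option maxHeartbeats 1000000

open MvPolynomial

/-- The affine algebraic toric set parameterized by the monomials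
`y^{v_1}, …, y^{v_s}`: the set of points `(x^{v_1}, …, x^{v_s}) ∈ K^s`
with all `x_i` nonzero. -/
def Xstar (K : Type*) [Field K] {s n : ℕ} (v : Fin s → Fin n → ℕ) : Set (Fin s → K) :=
  {p | ∃ x : Fin n → K, (∀ j, x j ≠ 0) ∧ ∀ i, p i = ∏ j, x j ^ v i j}

section Aux

/-- Exponent reduction modulo `q - 1` preserving positivity. -/
def redExp (q a : ℕ) : ℕ := if a = 0 then 0 else (a - 1) % (q - 1) + 1

lemma redExp_zero (q : ℕ) : redExp q 0 = 0 := rfl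

lemma redExp_le (q : ℕ) (hq : 2 ≤ q) (a : ℕ) : redExp q a ≤ q - 1 := by
  unfold redExp
  split
  · omega
  · have : (a - 1) % (q - 1) < q - 1 := Nat.mod_lt _ (by omega)
    omega

lemma pow_redExp {M : Type*} [Monoid M] (u : M) (q : ℕ) (hq : 2 ≤ q)
    (hu : u ^ (q - 1) = 1) (a : ℕ) : u ^ a = u ^ redExp q a := by
  unfold redExp
  split
  · rename_i h; rw [h]
  · rename_i h
    obtain ⟨k, hk⟩ : ∃ k, a = ((a - 1) % (q - 1) + 1) + (q - 1) * k := by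
      refine ⟨(a - 1) / (q - 1), ?_⟩
      have := Nat.mod_add_div (a - 1) (q - 1)
      omega
    conv_lhs => rw [hk]
    rw [pow_add, pow_mul, hu, one_pow, mul_one]

lemma field_pow_redExp {K : Type*} [Field K] [Fintype K] {q : ℕ}
    (hcard : Fintype.card K = q) (x : K) (a : ℕ) : x ^ a = x ^ redExp q a := by
  have hq : 2 ≤ q := hcard ▸ Fintype.one_lt_card
  by_cases hx : x = 0
  · subst hx
    by_cases ha : a = 0
    · subst ha; rw [redExp_zero]
    · have : redExp q a ≠ 0 := by unfold redExp; split <;> omega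
      rw [zero_pow ha, zero_pow this]
  · exact pow_redExp x q hq (hcard ▸ FiniteField.pow_card_sub_one_eq_one x hx) a

variable {K : Type*} [Field K] [Fintype K] {n : ℕ}

/-- Reduction of a polynomial: reduce every exponent by `redExp q`. -/
noncomputable def redP (q : ℕ) (p : MvPolynomial (Fin n) K) : MvPolynomial (Fin n) K :=
  ∑ a ∈ p.support, monomial (Finsupp.mapRange (redExp q) (redExp_zero q) a) (coeff a p)

lemma eval_redP {q : ℕ} (hcard : Fintype.card K = q) (p : MvPolynomial (Fin n) K)
    (x : Fin n → K) : eval x (redP q p) = eval x p := by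
  conv_rhs => rw [← support_sum_monomial_coeff p]
  rw [redP, map_sum, map_sum]
  refine Finset.sum_congr rfl fun a _ => ?_
  rw [eval_monomial, eval_monomial]
  congr 1
  rw [Finsupp.prod_mapRange_index (fun j => pow_zero (x j))]
  exact Finsupp.prod_congr fun j _ => (field_pow_redExp hcard (x j) (a j)).symm

lemma redP_mem {q : ℕ} (hq : 2 ≤ q) (p : MvPolynomial (Fin n) K) :
    redP q p ∈ restrictDegree (Fin n) K (q - 1) := by
  refine Submodule.sum_mem _ fun a _ => ?_
  rw [mem_restrictDegree]
  intro s hs i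
  have := support_monomial_subset hs
  rw [Finset.mem_singleton] at this
  subst this
  rw [Finsupp.mapRange_apply]
  exact redExp_le q hq (a i)

lemma redP_quot {q : ℕ} (hq : 2 ≤ q) (p : MvPolynomial (Fin n) K)
    (J : Ideal (MvPolynomial (Fin n) K))
    (hJ : ∀ j : Fin n, (X j : MvPolynomial (Fin n) K) ^ (q - 1) - 1 ∈ J) :
    Ideal.Quotient.mk J (redP q p) = Ideal.Quotient.mk J p := by
  have hu : ∀ j : Fin n, (Ideal.Quotient.mk J (X j)) ^ (q - 1) = 1 := by
    intro j
    have := (Ideal.Quotient.eq_zero_iff_mem).2 (hJ j)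
    rw [map_sub, map_pow, map_one, sub_eq_zero] at this
    exact this
  conv_rhs => rw [← support_sum_monomial_coeff p]
  rw [redP, map_sum, map_sum]
  refine Finset.sum_congr rfl fun a _ => ?_
  rw [monomial_eq, monomial_eq, map_mul, map_mul]
  congr 1
  rw [map_finsuppProd, map_finsuppProd,
    Finsupp.prod_mapRange_index (fun j => by rw [pow_zero, map_one])]
  refine Finsupp.prod_congr fun j _ => ?_
  rw [map_pow, map_pow]
  exact (pow_redExp _ q hq (hu j) (a j)).symm

universe u in
/-- Universe-polymorphic version of `MvPolynomial.eq_zero_of_eval_eq_zero`. -/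
lemma eq_zero_of_eval_eq_zero' {K : Type u} [Field K] [Fintype K] {n : ℕ}
    (p : MvPolynomial (Fin n) K) (h : ∀ y : Fin n → K, eval y p = 0)
    (hp : p ∈ restrictDegree (Fin n) K (Fintype.card K - 1)) : p = 0 := by
  classical
  let e : Fin n ≃ ULift.{u} (Fin n) := Equiv.ulift.symm
  have hp' : rename e p = 0 := by
    apply MvPolynomial.eq_zero_of_eval_eq_zero
    · intro y
      rw [eval_rename]
      exact h _
    · rw [mem_restrictDegree]
      intro t ht i
      rw [MvPolynomial.support_rename_of_injective e.injective, Finset.mem_image] at ht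
      obtain ⟨a, ha, rfl⟩ := ht
      rw [mem_restrictDegree] at hp
      obtain ⟨i', rfl⟩ := e.surjective i
      rw [Finsupp.mapDomain_equiv_apply, Equiv.symm_apply_apply]
      exact hp a ha i'
  exact (MvPolynomial.rename_injective e e.injective) (by rwa [map_zero])

/-- A polynomial vanishing on the torus `(Kˣ)ⁿ` lies in the ideal
generated by the `X j ^ (q-1) - 1`. -/
lemma torus_vanishing {q : ℕ} (hcard : Fintype.card K = q)
    (g : MvPolynomial (Fin n) K)
    (hg : ∀ x : Fin n → K, (∀ j, x j ≠ 0) → eval x g = 0) :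
    g ∈ Ideal.span (Set.range fun j : Fin n =>
      (X j : MvPolynomial (Fin n) K) ^ (q - 1) - 1) := by
  have hq : 2 ≤ q := hcard ▸ Fintype.one_lt_card
  set J := Ideal.span (Set.range fun j : Fin n =>
      (X j : MvPolynomial (Fin n) K) ^ (q - 1) - 1) with hJdef
  have hJ : ∀ j : Fin n, (X j : MvPolynomial (Fin n) K) ^ (q - 1) - 1 ∈ J :=
    fun j => Ideal.subset_span ⟨j, rfl⟩
  set G : MvPolynomial (Fin n) K := (∏ j, X j ^ (q - 1)) * g with hGdef
  have hGzero : ∀ x : Fin n → K, eval x G = 0 := by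
    intro x
    by_cases hx : ∀ j, x j ≠ 0
    · rw [hGdef, map_mul, hg x hx, mul_zero]
    · push_neg at hx
      obtain ⟨j, hj⟩ := hx
      rw [hGdef, map_mul, map_prod]
      rw [Finset.prod_eq_zero (Finset.mem_univ j)
        (by rw [map_pow, eval_X, hj, zero_pow (by omega)]), zero_mul]
  have hred0 : redP q G = 0 :=
    eq_zero_of_eval_eq_zero' _ (fun y => by rw [eval_redP hcard, hGzero])
      (by rw [hcard]; exact redP_mem hq G)
  have hGmem : G ∈ J := by
    have := redP_quot hq G J hJ
    rw [hred0, map_zero] at this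
    exact (Ideal.Quotient.eq_zero_iff_mem).1 this.symm
  have hmk : Ideal.Quotient.mk J g = Ideal.Quotient.mk J G := by
    rw [hGdef, map_mul, map_prod]
    have : ∀ j : Fin n, Ideal.Quotient.mk J ((X j : MvPolynomial (Fin n) K) ^ (q - 1)) = 1 := by
      intro j
      have := (Ideal.Quotient.eq_zero_iff_mem).2 (hJ j)
      rw [map_sub, map_one, sub_eq_zero] at this
      exact this
    rw [Finset.prod_congr rfl fun j _ => this j, Finset.prod_const_one, one_mul]
  rw [← Ideal.Quotient.eq_zero_iff_mem, hmk, Ideal.Quotient.eq_zero_iff_mem]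
  exact hGmem

lemma eval_aeval' {s : ℕ} (x : Fin n → K) (m : Fin s → MvPolynomial (Fin n) K)
    (f : MvPolynomial (Fin s) K) :
    eval x (aeval m f) = eval (fun i => eval x (m i)) f := by
  induction f using MvPolynomial.induction_on with
  | C a => simp
  | add p r hp hr => rw [map_add, map_add, map_add, hp, hr]
  | mul_X p i hp => rw [map_mul, map_mul, map_mul, hp, aeval_X, eval_X]

end Aux

/-- **Theorem.** Over the finite field `K = 𝔽_q`, the vanishing ideal of `X*` is the
contraction to `S = K[t_1,…,t_s]` of the ideal
`(t_1 - y^{v_1}, …, t_s - y^{v_s}, y_1^{q-1} - 1, …, y_n^{q-1} - 1)` of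
`B = K[t_1,…,t_s,y_1,…,y_n]`. -/
theorem vanishingIdeal_Xstar_eq_contraction
    {K : Type*} [Field K] [Fintype K] {q s n : ℕ} (hq : Fintype.card K = q)
    (v : Fin s → Fin n → ℕ) (f : MvPolynomial (Fin s) K) :
    (∀ p ∈ Xstar K v, eval p f = 0) ↔
      f ∈ Ideal.comap (rename (Sum.inl : Fin s → Fin s ⊕ Fin n))
        (Ideal.span
          ((Set.range fun i : Fin s =>
              (X (Sum.inl i) - ∏ j, X (Sum.inr j) ^ v i j :
                MvPolynomial (Fin s ⊕ Fin n) K)) ∪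
           (Set.range fun j : Fin n =>
              (X (Sum.inr j) ^ (q - 1) - 1 : MvPolynomial (Fin s ⊕ Fin n) K)))) := by
  set I : Ideal (MvPolynomial (Fin s ⊕ Fin n) K) := Ideal.span
          ((Set.range fun i : Fin s =>
              (X (Sum.inl i) - ∏ j, X (Sum.inr j) ^ v i j :
                MvPolynomial (Fin s ⊕ Fin n) K)) ∪
           (Set.range fun j : Fin n =>
              (X (Sum.inr j) ^ (q - 1) - 1 : MvPolynomial (Fin s ⊕ Fin n) K))) with hIdef
  rw [Ideal.mem_comap]
  constructor
  · -- forward direction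
    intro h
    set m : Fin s → MvPolynomial (Fin n) K := fun i => ∏ j, X j ^ v i j with hmdef
    have hg₀ : (aeval m f : MvPolynomial (Fin n) K) ∈
        Ideal.span (Set.range fun j : Fin n =>
          (X j : MvPolynomial (Fin n) K) ^ (q - 1) - 1) := by
      apply torus_vanishing hq
      intro x hx
      rw [eval_aeval']
      have : (fun i => eval x (m i)) ∈ Xstar K v := ⟨x, hx, fun i => by simp [hmdef]⟩
      exact h _ this
    -- push forward along rename inr
    have hgI : rename (Sum.inr : Fin n → Fin s ⊕ Fin n) (aeval m f) ∈ I := by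
      have hle : Ideal.span (Set.range fun j : Fin n =>
          (X j : MvPolynomial (Fin n) K) ^ (q - 1) - 1) ≤
          Ideal.comap (rename (Sum.inr : Fin n → Fin s ⊕ Fin n)) I := by
        rw [Ideal.span_le]
        rintro _ ⟨j, rfl⟩
        rw [SetLike.mem_coe, Ideal.mem_comap, map_sub, map_pow, rename_X, map_one]
        exact Ideal.subset_span (Or.inr ⟨j, rfl⟩)
      exact hle hg₀
    -- the difference is in I
    have key : ∀ h₀ : MvPolynomial (Fin s) K,
        Ideal.Quotient.mk I (rename (Sum.inl : Fin s → Fin s ⊕ Fin n) h₀) =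
        Ideal.Quotient.mk I (rename (Sum.inr : Fin n → Fin s ⊕ Fin n) (aeval m h₀)) := by
      intro h₀
      induction h₀ using MvPolynomial.induction_on with
      | C a => simp
      | add p r hp hr => simp only [map_add, hp, hr]
      | mul_X p i hp =>
        rw [map_mul, map_mul, map_mul, map_mul, map_mul, hp]
        congr 1
        rw [rename_X, aeval_X]
        have h1 : rename (Sum.inr : Fin n → Fin s ⊕ Fin n) (m i) =
            ∏ j, (X (Sum.inr j) : MvPolynomial (Fin s ⊕ Fin n) K) ^ v i j := by
          simp [hmdef]
        rw [h1]
        have h2 : (X (Sum.inl i) : MvPolynomial (Fin s ⊕ Fin n) K) -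
            ∏ j, X (Sum.inr j) ^ v i j ∈ I := Ideal.subset_span (Or.inl ⟨i, rfl⟩)
        exact (Ideal.Quotient.eq).2 h2
    have hdiff : rename (Sum.inl : Fin s → Fin s ⊕ Fin n) f -
        rename (Sum.inr : Fin n → Fin s ⊕ Fin n) (aeval m f) ∈ I :=
      (Ideal.Quotient.eq).1 (key f)
    have := Ideal.add_mem I hdiff hgI
    rwa [sub_add_cancel] at this
  · -- backward direction
    intro h p hp
    obtain ⟨x, hx, hpx⟩ := hp
    have hker : I ≤ RingHom.ker (eval (Sum.elim p x) :
        MvPolynomial (Fin s ⊕ Fin n) K →+* K) := by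
      rw [hIdef, Ideal.span_le]
      apply Set.union_subset
      · rintro _ ⟨i, rfl⟩
        rw [SetLike.mem_coe, RingHom.mem_ker, map_sub, eval_X, map_prod]
        simp only [map_pow, eval_X, Sum.elim_inl, Sum.elim_inr]
        rw [hpx i, sub_self]
      · rintro _ ⟨j, rfl⟩
        rw [SetLike.mem_coe, RingHom.mem_ker, map_sub, map_pow, eval_X, map_one,
          Sum.elim_inr]
        have hone := FiniteField.pow_card_sub_one_eq_one (x j) (hx j)
        rw [hq] at hone
        rw [hone, sub_self]
    have := hker h
    rwa [RingHom.mem_ker, eval_rename, Sum.elim_comp_inl] at this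
end

section
/- Let B = K[t_1,…,t_s,y_1,…,y_n] be a polynomial ring over an infinite field K. Then the vanishing ideal of X* satisfies I(X*) = (t_1 − y^{v_1}, …, t_s − y^{v_s}) ∩ S, where the intersection is the contraction of the displayed ideal of B along the natural inclusion S → B. -/
open MvPolynomial

/-- **Proposition.** Over an infinite field `K`, the vanishing ideal of `X*` is the
contraction to `S = K[t_1,…,t_s]` of the ideal `(t_1 - y^{v_1}, …, t_s - y^{v_s})`
of `B = K[t_1,…,t_s,y_1,…,y_n]`. -/
theorem vanishingIdeal_Xstar_eq_contraction_of_infinite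
    {K : Type*} [Field K] [Infinite K] {s n : ℕ}
    (v : Fin s → Fin n → ℕ) (f : MvPolynomial (Fin s) K) :
    (∀ p ∈ Xstar K v, eval p f = 0) ↔
      f ∈ Ideal.comap (rename (Sum.inl : Fin s → Fin s ⊕ Fin n))
        (Ideal.span
          (Set.range fun i : Fin s =>
            (X (Sum.inl i) - ∏ j, X (Sum.inr j) ^ v i j :
              MvPolynomial (Fin s ⊕ Fin n) K))) := by
  set I : Ideal (MvPolynomial (Fin s ⊕ Fin n) K) :=
    Ideal.span (Set.range fun i : Fin s =>
      (X (Sum.inl i) - ∏ j, X (Sum.inr j) ^ v i j :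
        MvPolynomial (Fin s ⊕ Fin n) K)) with hI
  constructor
  · intro hvan
    -- the polynomial obtained by substituting the monomials for the t-variables
    set g : MvPolynomial (Fin n) K :=
      aeval (fun i => ∏ j, (X j : MvPolynomial (Fin n) K) ^ v i j) f with hg
    have keval : ∀ x : Fin n → K, eval x g = eval (fun i => ∏ j, x j ^ v i j) f := by
      intro x
      have : (aeval x : MvPolynomial (Fin n) K →ₐ[K] K).comp
          (aeval (fun i => ∏ j, (X j : MvPolynomial (Fin n) K) ^ v i j))
          = aeval (fun i => ∏ j, x j ^ v i j) := by
        apply MvPolynomial.algHom_ext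
        intro i
        simp
      have h2 := AlgHom.congr_fun this f
      have e1 : ∀ (q : MvPolynomial (Fin n) K), aeval x q = eval x q := fun q =>
        RingHom.congr_fun (coe_aeval_eq_eval (f := x)) q
      have e2 : ∀ (q : MvPolynomial (Fin s) K), aeval (fun i => ∏ j, x j ^ v i j) q
          = eval (fun i => ∏ j, x j ^ v i j) q := fun q =>
        RingHom.congr_fun (coe_aeval_eq_eval (f := fun i => ∏ j, x j ^ v i j)) q
      rw [hg, ← e1, ← e2]
      simpa using h2
    have hg0 : g = 0 := by
      have hprod : g * ∏ j, (X j : MvPolynomial (Fin n) K) = 0 := by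
        apply MvPolynomial.funext
        intro x
        simp only [map_mul, map_prod, eval_X, map_zero]
        by_cases hx : ∀ j, x j ≠ 0
        · have hx0 : eval x g = 0 := by
            rw [keval]
            exact hvan _ ⟨x, hx, fun i => rfl⟩
          rw [hx0, zero_mul]
        · push_neg at hx
          obtain ⟨j, hj⟩ := hx
          rw [Finset.prod_eq_zero (Finset.mem_univ j) hj, mul_zero]
      rcases mul_eq_zero.mp hprod with h | h
      · exact h
      · exact absurd h (Finset.prod_ne_zero_iff.mpr fun j _ => MvPolynomial.X_ne_zero j)
    -- now show membership modulo I
    rw [Ideal.mem_comap]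
    rw [← Ideal.Quotient.eq_zero_iff_mem]
    have hcomp : (Ideal.Quotient.mkₐ K I).comp
        (rename (Sum.inl : Fin s → Fin s ⊕ Fin n)) =
        (Ideal.Quotient.mkₐ K I).comp
          (aeval (fun i => ∏ j,
            (X (Sum.inr j) : MvPolynomial (Fin s ⊕ Fin n) K) ^ v i j)) := by
      apply MvPolynomial.algHom_ext
      intro i
      simp only [AlgHom.comp_apply, rename_X, aeval_X, Ideal.Quotient.mkₐ_eq_mk]
      rw [Ideal.Quotient.mk_eq_mk_iff_sub_mem]
      exact Ideal.subset_span ⟨i, rfl⟩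
    have h1 := AlgHom.congr_fun hcomp f
    simp only [AlgHom.comp_apply, Ideal.Quotient.mkₐ_eq_mk] at h1
    rw [h1]
    have h2 : (aeval (fun i => ∏ j,
        (X (Sum.inr j) : MvPolynomial (Fin s ⊕ Fin n) K) ^ v i j)) f
        = rename (Sum.inr : Fin n → Fin s ⊕ Fin n) g := by
      rw [hg]
      have : (rename (Sum.inr : Fin n → Fin s ⊕ Fin n)).comp
          (aeval (fun i => ∏ j, (X j : MvPolynomial (Fin n) K) ^ v i j))
          = aeval (fun i => ∏ j,
            (X (Sum.inr j) : MvPolynomial (Fin s ⊕ Fin n) K) ^ v i j) := by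
        apply MvPolynomial.algHom_ext
        intro i
        simp
      exact (AlgHom.congr_fun this f).symm
    rw [h2, hg0, map_zero, map_zero]
  · rintro hf p ⟨x, hx, hpx⟩
    rw [Ideal.mem_comap] at hf
    have hker : I ≤ RingHom.ker (eval (Sum.elim p x) :
        MvPolynomial (Fin s ⊕ Fin n) K →+* K) := by
      rw [hI, Ideal.span_le]
      rintro _ ⟨i, rfl⟩
      simp [RingHom.mem_ker, hpx i]
    have h0 := hker hf
    rw [RingHom.mem_ker, eval_rename] at h0
    simpa using h0
end

section
/- Let K be an infinite field. Then the vanishing ideal I(X*) of the affine algebraic toric set X* equals the kernel of the K-algebra homomorphism φ : K[t_1,…,t_s] → K[y_1,…,y_n] determined by φ(t_i) = y^{v_i} for i = 1,…,s; that is, I(X*) is the toric ideal of the monomial subring K[y^{v_1},…,y^{v_s}]. -/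
open MvPolynomial

/-- The vanishing ideal of `X* ⊆ K^s` in `S = K[t_1,…,t_s]`. -/
noncomputable def vanishingIdealXstar (K : Type*) [Field K] {s n : ℕ}
    (v : Fin s → Fin n → ℕ) : Ideal (MvPolynomial (Fin s) K) :=
  ⨅ p ∈ Xstar K v, RingHom.ker (eval p)


open MvPolynomial

lemma key_eval {K : Type*} [Field K] {s n : ℕ} (v : Fin s → Fin n → ℕ)
    (x : Fin n → K) (f : MvPolynomial (Fin s) K) :
    eval x (aeval (fun i : Fin s => ∏ j, X j ^ v i j :
        Fin s → MvPolynomial (Fin n) K) f) = eval (fun i => ∏ j, x j ^ v i j) f := by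
  induction f using MvPolynomial.induction_on with
  | C a => simp
  | add p q hp hq => simp only [map_add, hp, hq]
  | mul_X p i hp => simp only [map_mul, hp, aeval_X, map_prod, map_pow, eval_X]

theorem vanishingIdeal_Xstar_eq_toric_ideal'
    {K : Type*} [Field K] [Infinite K] {s n : ℕ} (v : Fin s → Fin n → ℕ) :
    (⨅ p ∈ {p : Fin s → K | ∃ x : Fin n → K, (∀ j, x j ≠ 0) ∧ ∀ i, p i = ∏ j, x j ^ v i j},
      RingHom.ker (eval p)) =
      RingHom.ker (aeval (fun i : Fin s => ∏ j, X j ^ v i j :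
        Fin s → MvPolynomial (Fin n) K) :
          MvPolynomial (Fin s) K →ₐ[K] MvPolynomial (Fin n) K) := by
  ext f
  simp only [Ideal.mem_iInf, RingHom.mem_ker, Set.mem_setOf_eq, AlgHom.toRingHom_eq_coe,
    RingHom.coe_coe]
  constructor
  · intro h
    set g := aeval (fun i : Fin s => ∏ j, X j ^ v i j :
        Fin s → MvPolynomial (Fin n) K) f with hg
    have hmul : g * ∏ j, X j = 0 := by
      apply MvPolynomial.funext
      intro x
      simp only [map_mul, map_prod, eval_X, map_zero]
      by_cases hx : ∀ j, x j ≠ 0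
      · have := h (fun i => ∏ j, x j ^ v i j) ⟨x, hx, fun i => rfl⟩
        rw [hg, key_eval, this, zero_mul]
      · push_neg at hx
        obtain ⟨j, hj⟩ := hx
        rw [Finset.prod_eq_zero (Finset.mem_univ j) hj, mul_zero]
    have hne : (∏ j, X j : MvPolynomial (Fin n) K) ≠ 0 :=
      Finset.prod_ne_zero_iff.mpr fun j _ => X_ne_zero j
    exact (mul_eq_zero.mp hmul).resolve_right hne
  · rintro h p ⟨x, hx, hp⟩
    have : p = fun i => ∏ j, x j ^ v i j := funext hp
    rw [this, ← key_eval v x f, h, map_zero]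

/-- **Proposition.** Over an infinite field `K`, the vanishing ideal `I(X*)` equals the
kernel of the `K`-algebra homomorphism `K[t_1,…,t_s] → K[y_1,…,y_n]`, `t_i ↦ y^{v_i}`;
that is, `I(X*)` is the toric ideal of the monomial subring `K[y^{v_1},…,y^{v_s}]`. -/
theorem vanishingIdeal_Xstar_eq_toric_ideal
    {K : Type*} [Field K] [Infinite K] {s n : ℕ} (v : Fin s → Fin n → ℕ) :
    vanishingIdealXstar K v =
      RingHom.ker (aeval (fun i : Fin s => ∏ j, X j ^ v i j :
        Fin s → MvPolynomial (Fin n) K) :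
          MvPolynomial (Fin s) K →ₐ[K] MvPolynomial (Fin n) K) := by
  exact vanishingIdeal_Xstar_eq_toric_ideal' v
end
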